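/- arXiv:0707.3164 — 3 statements merged into one kernel-verified Lean document; each statement's English description precedes it below -/
import Mathlib

section
/- Let Φ be a nonzero homogeneous harmonic polynomial of degree s in ℝ[y₁,…,yₙ] with n ≥ 1. Then for every k ≥ 0, tr^k(g^k Φ) ≠ 0 while tr^{k+1}(g^k Φ) = 0; i.e. the 'depth' of g^k Φ, defined as the largest m with tr^m applied to it nonzero, equals k. -/
open MvPolynomial Finset

/-- The index-counting (Euler) operator `N = Σᵢ yᵢ ∂/∂yᵢ` on `ℝ[y₁,…,yₙ]`. -/
noncomputable def opN (n : ℕ) : Module.End ℝ (MvPolynomial (Fin n) ℝ) :=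
  ∑ i : Fin n, (LinearMap.mulLeft ℝ (X i)) ∘ₗ (pderiv i).toLinearMap

/-- Multiplication by `Σᵢ yᵢ²` on `ℝ[y₁,…,yₙ]`. -/
noncomputable def opG (n : ℕ) : Module.End ℝ (MvPolynomial (Fin n) ℝ) :=
  LinearMap.mulLeft ℝ (∑ i : Fin n, X i ^ 2)

/-- The trace (Laplacian) operator `tr = Σᵢ ∂²/∂yᵢ²` on `ℝ[y₁,…,yₙ]`. -/
noncomputable def opTr (n : ℕ) : Module.End ℝ (MvPolynomial (Fin n) ℝ) :=
  ∑ i : Fin n, (pderiv i).toLinearMap ∘ₗ (pderiv i).toLinearMap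

lemma pd_r2 (n : ℕ) (i : Fin n) :
    pderiv i (∑ j : Fin n, (X j : MvPolynomial (Fin n) ℝ) ^ 2) = 2 * X i := by
  rw [map_sum]; simp [pderiv_X, Pi.single_apply]

lemma trG (n : ℕ) (f : MvPolynomial (Fin n) ℝ) :
    opTr n (opG n f) = opG n (opTr n f) + (4 : ℝ) • opN n f + ((2*n : ℕ) : ℝ) • f := by
  simp only [opTr, opG, opN, LinearMap.sum_apply, LinearMap.comp_apply,
    LinearMap.mulLeft_apply, LinearMap.smul_apply, Derivation.coeFn_coe, pderiv_mul, pd_r2,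
    map_add, map_mul]
  rw [Finset.mul_sum, Finset.smul_sum]
  have h2 : ((2*n : ℕ) : ℝ) • f = ∑ _i : Fin n, (2:ℕ) • f := by
    rw [Finset.sum_const, card_univ, Fintype.card_fin, smul_smul]
    rw [Nat.cast_smul_eq_nsmul]; ring_nf
  rw [h2, ← Finset.sum_add_distrib, ← Finset.sum_add_distrib]
  refine Finset.sum_congr rfl fun i _ => ?_
  have hc : (pderiv i) (2 : MvPolynomial (Fin n) ℝ) = 0 := by
    rw [show (2 : MvPolynomial (Fin n) ℝ) = C (2:ℝ) from (map_ofNat C 2).symm, pderiv_C]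
  simp only [pderiv_X_self, hc, nsmul_eq_mul, MvPolynomial.smul_eq_C_mul, map_ofNat]
  push_cast
  ring

lemma Ng (n : ℕ) (f : MvPolynomial (Fin n) ℝ) :
    opN n (opG n f) = opG n (opN n f) + (2:ℕ) • opG n f := by
  simp only [opN, opG, LinearMap.sum_apply, LinearMap.comp_apply,
    LinearMap.mulLeft_apply, Derivation.coeFn_coe, pderiv_mul, pd_r2]
  rw [Finset.mul_sum]
  have h2 : (2:ℕ) • ((∑ j : Fin n, (X j : MvPolynomial (Fin n) ℝ)^2) * f)
      = ∑ j : Fin n, (2:ℕ) • (X j ^ 2 * f) := by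
    rw [← Finset.smul_sum, Finset.sum_mul]
  rw [h2, ← Finset.sum_add_distrib]
  refine Finset.sum_congr rfl fun i _ => ?_
  simp only [nsmul_eq_mul]
  push_cast
  ring

/-- for `Φ ≠ 0` harmonic homogeneous of degree `s`, `n ≥ 1`, the depth
of `g^k Φ` is exactly `k`: `tr^k(g^k Φ) ≠ 0` while `tr^{k+1}(g^k Φ) = 0`. -/
theorem stmt4 (n s : ℕ) (hn : 1 ≤ n) (Φ : MvPolynomial (Fin n) ℝ) (hΦ : Φ ≠ 0)
    (hhom : opN n Φ = (s : ℝ) • Φ) (hharm : opTr n Φ = 0) :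
    ∀ k : ℕ,
      (opTr n ^ k) ((opG n ^ k) Φ) ≠ 0 ∧ (opTr n ^ (k + 1)) ((opG n ^ k) Φ) = 0 := by
  have eigN : ∀ k : ℕ, opN n ((opG n ^ k) Φ) = ((s + 2*k : ℕ) : ℝ) • (opG n ^ k) Φ := by
    intro k
    induction k with
    | zero => simpa using hhom
    | succ k ih =>
      have hpow : (opG n ^ (k+1)) Φ = opG n ((opG n ^ k) Φ) := by
        rw [pow_succ']; rfl
      rw [hpow, Ng, ih, map_smul, ← Nat.cast_smul_eq_nsmul ℝ 2]
      push_cast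
      module
  have trGk : ∀ k : ℕ, opTr n ((opG n ^ (k+1)) Φ)
      = ((2*(k+1)*(2*s+n+2*k) : ℕ) : ℝ) • (opG n ^ k) Φ := by
    intro k
    induction k with
    | zero =>
      have hpow : (opG n ^ 1) Φ = opG n Φ := by rw [pow_one]
      rw [hpow, trG, hharm, map_zero, hhom]
      simp only [pow_zero, Module.End.one_apply]
      push_cast
      module
    | succ k ih =>
      have hpow : (opG n ^ (k+1+1)) Φ = opG n ((opG n ^ (k+1)) Φ) := by
        rw [pow_succ']; rfl
      rw [hpow, trG, ih, map_smul, eigN (k+1)]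
      have hpow2 : (opG n ^ (k+1)) Φ = opG n ((opG n ^ k) Φ) := by
        rw [pow_succ']; rfl
      rw [hpow2]
      push_cast
      module
  have key : ∀ k : ℕ, ∃ c : ℝ, 0 < c ∧ (opTr n ^ k) ((opG n ^ k) Φ) = c • Φ := by
    intro k
    induction k with
    | zero => exact ⟨1, one_pos, by simp⟩
    | succ k ih =>
      obtain ⟨c, hc, hce⟩ := ih
      refine ⟨((2*(k+1)*(2*s+n+2*k) : ℕ) : ℝ) * c, ?_, ?_⟩
      · apply mul_pos _ hc
        exact_mod_cast Nat.mul_pos (by omega : 0 < 2*(k+1)) (by omega : 0 < 2*s+n+2*k)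
      · have h1 : (opTr n ^ (k+1)) ((opG n ^ (k+1)) Φ)
            = (opTr n ^ k) (opTr n ((opG n ^ (k+1)) Φ)) := by
          rw [pow_succ]; rfl
        rw [h1, trGk k, map_smul, hce, smul_smul]
  intro k
  obtain ⟨c, hc, hce⟩ := key k
  constructor
  · rw [hce]
    intro h0
    apply hΦ
    calc Φ = c⁻¹ • (c • Φ) := by rw [smul_smul, inv_mul_cancel₀ hc.ne', one_smul]
    _ = 0 := by rw [h0, smul_zero]
  · have h1 : (opTr n ^ (k+1)) ((opG n ^ k) Φ)
        = opTr n ((opTr n ^ k) ((opG n ^ k) Φ)) := by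
      rw [pow_succ']; rfl
    rw [h1, hce, map_smul, hharm, smul_zero]
end

section
/- Define 𝒩 = N + n/2 on ℝ[y₁,…,yₙ] (with N the Euler operator), and let 𝒞 be the linear operator acting on g^k Φ (Φ harmonic homogeneous of degree s) by the scalar s + (n−2)/2. Then 𝒞² = ((n−2)/2)²·Id − c, where c = g·tr − N(N+n−2), as operators on ℝ[y₁,…,yₙ]; i.e. 𝒞 is a square root of ((n−2)/2)² − c. -/
open MvPolynomial Finset

variable {n : ℕ}

lemma euler_monomial (i : Fin n) (u : Fin n →₀ ℕ) (a : ℝ) :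
    X i * pderiv i (monomial u a) = (u i : ℝ) • monomial u a := by
  rw [pderiv_monomial]
  rcases Nat.eq_zero_or_pos (u i) with h | h
  · simp [h]
  · have hu : Finsupp.single i 1 + (u - Finsupp.single i 1) = u := by
      ext j
      simp only [Finsupp.coe_add, Finsupp.coe_tsub, Pi.add_apply, Pi.sub_apply]
      rcases eq_or_ne j i with rfl | hj
      · simp [Nat.add_sub_cancel' h]
      · simp [Finsupp.single_apply, Ne.symm hj]
    rw [X, monomial_mul, one_mul, smul_monomial, hu, smul_eq_mul, mul_comm]

lemma opN_monomial (u : Fin n →₀ ℕ) (a : ℝ) :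
    opN n (monomial u a) = ((Finsupp.degree u : ℕ) : ℝ) • monomial u a := by
  simp only [opN, LinearMap.sum_apply, LinearMap.comp_apply, LinearMap.mulLeft_apply,
    Derivation.coeFn_coe, euler_monomial]
  rw [← Finset.sum_smul]
  congr 1
  rw [Finsupp.degree_apply]
  push_cast
  rw [Finset.sum_subset (Finset.subset_univ u.support)]
  intro x _ hx
  simp [Finsupp.notMem_support_iff.mp hx]

lemma euler {p : MvPolynomial (Fin n) ℝ} {d : ℕ} (hp : p.IsHomogeneous d) :
    opN n p = (d : ℝ) • p := by
  conv_lhs => rw [p.as_sum]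
  rw [map_sum]
  conv_rhs => rw [p.as_sum, Finset.smul_sum]
  refine Finset.sum_congr rfl fun v hv => ?_
  rw [opN_monomial]
  congr 2
  have := hp (Finsupp.mem_support_iff.mp hv)
  rw [← this, Finsupp.degree_eq_weight_one]; rfl

lemma pderiv_isHomogeneous {p : MvPolynomial (Fin n) ℝ} {d : ℕ} (hp : p.IsHomogeneous d)
    (i : Fin n) : (pderiv i p).IsHomogeneous (d - 1) := by
  rw [← mem_homogeneousSubmodule]
  have : pderiv i p = ∑ v ∈ p.support, pderiv i (monomial v (coeff v p)) := by
    conv_lhs => rw [p.as_sum]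
    rw [map_sum]
  rw [this]
  refine Submodule.sum_mem _ fun v hv => ?_
  rw [mem_homogeneousSubmodule, pderiv_monomial]
  rcases Nat.eq_zero_or_pos (v i) with h | h
  · simp only [h, Nat.cast_zero, mul_zero]
    rw [monomial_zero]
    exact isHomogeneous_zero _ _ _
  · apply isHomogeneous_monomial
    have hdeg : Finsupp.degree v = d := by
      have := hp (Finsupp.mem_support_iff.mp hv)
      rw [← this, Finsupp.degree_eq_weight_one]; rfl
    have hsplit : Finsupp.single i 1 + (v - Finsupp.single i 1) = v := by
      ext j
      simp only [Finsupp.coe_add, Finsupp.coe_tsub, Pi.add_apply, Pi.sub_apply]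
      rcases eq_or_ne j i with rfl | hj
      · simp [Nat.add_sub_cancel' h]
      · simp [Finsupp.single_apply, Ne.symm hj]
    have : Finsupp.degree (Finsupp.single i 1 + (v - Finsupp.single i 1)) = d := by
      rw [hsplit, hdeg]
    rw [Finsupp.degree_eq_weight_one, map_add] at this
    have hsing : Finsupp.weight 1 (Finsupp.single i (1:ℕ)) = 1 := by
      simp [Finsupp.weight_apply, Finsupp.sum_single_index]
    erw [hsing] at this
    rw [Finsupp.degree_eq_weight_one]
    omega

lemma pderiv_of_isHomogeneous_zero {p : MvPolynomial (Fin n) ℝ} (hp : p.IsHomogeneous 0)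
    (i : Fin n) : pderiv i p = 0 := by
  conv_lhs => rw [p.as_sum]
  rw [map_sum]
  refine Finset.sum_eq_zero fun v hv => ?_
  have hv0 : v = 0 := by
    have := hp (Finsupp.mem_support_iff.mp hv)
    change Finsupp.weight (fun _ => 1) v = 0 at this
    rwa [← Finsupp.degree_eq_weight_one, Finsupp.degree_eq_zero_iff] at this
  subst hv0
  simp [pderiv_monomial]

lemma pderiv_gelem (i : Fin n) :
    pderiv i (∑ j : Fin n, X j ^ 2 : MvPolynomial (Fin n) ℝ) = (2:ℝ) • X i := by
  rw [map_sum, Finset.sum_eq_single i]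
  · rw [pderiv_pow, pderiv_X_self]
    push_cast [Algebra.smul_def, algebraMap_eq]
    ring_nf
    simp [map_ofNat]
  · intro j _ hj
    rw [pderiv_pow, pderiv_X_of_ne hj, mul_zero]
  · simp

lemma comTrG (p : MvPolynomial (Fin n) ℝ) :
    opTr n (opG n p) = opG n (opTr n p) + (4:ℝ) • opN n p + ((2*n : ℕ) : ℝ) • p := by
  have key : ∀ i : Fin n, pderiv i (pderiv i ((∑ j : Fin n, X j ^ 2) * p)) =
      (∑ j : Fin n, X j ^ 2) * pderiv i (pderiv i p)
        + (4:ℝ) • (X i * pderiv i p) + (2:ℝ) • p := by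
    intro i
    have h1 : pderiv i ((∑ j : Fin n, X j ^ 2) * p)
        = (2:ℝ) • (X i * p) + (∑ j : Fin n, X j ^ 2) * pderiv i p := by
      rw [pderiv_mul, pderiv_gelem, smul_mul_assoc]
    rw [h1, map_add, Derivation.map_smul, pderiv_mul, pderiv_X_self, one_mul,
      pderiv_mul, pderiv_gelem, smul_mul_assoc]
    module
  simp only [opN, opG, opTr, LinearMap.sum_apply, LinearMap.comp_apply,
    LinearMap.mulLeft_apply, Derivation.coeFn_coe]
  rw [Finset.sum_congr rfl fun i _ => key i]
  rw [Finset.sum_add_distrib, Finset.sum_add_distrib, ← Finset.mul_sum, ← Finset.smul_sum,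
    Finset.sum_const, card_univ, Fintype.card_fin]
  congr 1
  rw [← Nat.cast_smul_eq_nsmul ℝ n, smul_smul]
  push_cast
  ring_nf

lemma comNG (p : MvPolynomial (Fin n) ℝ) :
    opN n (opG n p) = opG n (opN n p) + (2:ℝ) • opG n p := by
  have key : ∀ i : Fin n, X i * pderiv i ((∑ j : Fin n, X j ^ 2) * p) =
      (∑ j : Fin n, X j ^ 2) * (X i * pderiv i p) + (2:ℝ) • (X i ^ 2 * p) := by
    intro i
    rw [pderiv_mul, pderiv_gelem, smul_mul_assoc, mul_add, mul_smul_comm]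
    ring_nf
  simp only [opN, opG, LinearMap.sum_apply, LinearMap.comp_apply,
    LinearMap.mulLeft_apply, Derivation.coeFn_coe]
  rw [Finset.sum_congr rfl fun i _ => key i]
  rw [Finset.sum_add_distrib, ← Finset.mul_sum, ← Finset.smul_sum, ← Finset.sum_mul]

lemma opN_opG_pow {p : MvPolynomial (Fin n) ℝ} {t : ℝ} (h : opN n p = t • p) (k : ℕ) :
    opN n ((opG n ^ k) p) = (t + 2*k) • (opG n ^ k) p := by
  induction k with
  | zero => simpa using h
  | succ k IH =>
    have h1 : (opG n ^ (k+1)) p = opG n ((opG n ^ k) p) := by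
      rw [pow_succ', Module.End.mul_apply]
    rw [h1, comNG, IH, map_smul]
    push_cast
    module

lemma opTr_opG_pow {p : MvPolynomial (Fin n) ℝ} {s : ℝ} (hN : opN n p = s • p) (k : ℕ) :
    opTr n ((opG n ^ (k+1)) p) = (opG n ^ (k+1)) (opTr n p)
      + (2*((k:ℝ)+1)*(2*s+2*k+n)) • (opG n ^ k) p := by
  induction k with
  | zero =>
    simp only [zero_add, pow_one, pow_zero, Module.End.one_apply]
    rw [comTrG, hN]
    push_cast
    module
  | succ k IH =>
    have h2 : ∀ (m : ℕ) (q : MvPolynomial (Fin n) ℝ),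
        opG n ((opG n ^ m) q) = (opG n ^ (m+1)) q := by
      intro m q; rw [← Module.End.mul_apply, ← pow_succ']
    rw [show k+1+1 = k+2 from rfl, ← h2 (k+1) p, comTrG, IH, map_add, map_smul, h2, h2,
      opN_opG_pow hN (k+1)]
    push_cast
    module

lemma gelem_isHomogeneous :
    (∑ j : Fin n, X j ^ 2 : MvPolynomial (Fin n) ℝ).IsHomogeneous 2 := by
  rw [← mem_homogeneousSubmodule]
  exact Submodule.sum_mem _ fun j _ => (mem_homogeneousSubmodule _ _).2 (isHomogeneous_X_pow j 2)

lemma opG_isHomogeneous {p : MvPolynomial (Fin n) ℝ} {d : ℕ} (hp : p.IsHomogeneous d) :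
    (opG n p).IsHomogeneous (2 + d) := by
  have : opG n p = (∑ j : Fin n, X j ^ 2) * p := rfl
  rw [this]
  exact gelem_isHomogeneous.mul hp

lemma opTr_isHomogeneous {p : MvPolynomial (Fin n) ℝ} {d : ℕ} (hp : p.IsHomogeneous d) :
    (opTr n p).IsHomogeneous (d - 2) := by
  rw [← mem_homogeneousSubmodule]
  simp only [opTr, LinearMap.sum_apply, LinearMap.comp_apply, Derivation.coeFn_coe]
  refine Submodule.sum_mem _ fun i _ => (mem_homogeneousSubmodule _ _).2 ?_
  have := pderiv_isHomogeneous (pderiv_isHomogeneous hp i) i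
  rwa [Nat.sub_sub] at this

lemma opTr_eq_zero_of_le_one {p : MvPolynomial (Fin n) ℝ} {d : ℕ} (hp : p.IsHomogeneous d)
    (hd : d ≤ 1) : opTr n p = 0 := by
  simp only [opTr, LinearMap.sum_apply, LinearMap.comp_apply, Derivation.coeFn_coe]
  refine Finset.sum_eq_zero fun i _ => ?_
  interval_cases d
  · rw [pderiv_of_isHomogeneous_zero hp i, map_zero]
  · exact pderiv_of_isHomogeneous_zero (pderiv_isHomogeneous hp i) i

/-- The spanning set. -/
def SS (n : ℕ) : Set (MvPolynomial (Fin n) ℝ) :=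
  {q | ∃ (s k : ℕ) (Φ : MvPolynomial (Fin n) ℝ),
    Φ.IsHomogeneous s ∧ opTr n Φ = 0 ∧ q = (opG n ^ k) Φ}

lemma main_induction (hn : 1 ≤ n) (d : ℕ) :
    ∀ P : MvPolynomial (Fin n) ℝ, P.IsHomogeneous d →
      ((∃ Φ Q, Φ.IsHomogeneous d ∧ opTr n Φ = 0 ∧ Q.IsHomogeneous (d-2) ∧ P = Φ + opG n Q) ∧
       (∀ k : ℕ, ∃ Q, Q.IsHomogeneous d ∧ opTr n ((opG n ^ (k+1)) Q) = (opG n ^ k) P) ∧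
       P ∈ Submodule.span ℝ (SS n)) := by
  induction d using Nat.strong_induction_on with
  | _ d IH =>
  intro P hP
  have h2 : ∀ (m : ℕ) (q : MvPolynomial (Fin n) ℝ),
      opG n ((opG n ^ m) q) = (opG n ^ (m+1)) q := by
    intro m q; rw [← Module.End.mul_apply, ← pow_succ']
  have h2' : ∀ (m : ℕ) (q : MvPolynomial (Fin n) ℝ),
      (opG n ^ m) (opG n q) = (opG n ^ (m+1)) q := by
    intro m q; rw [← Module.End.mul_apply, ← pow_succ]
  by_cases hd : d ≤ 1
  · -- low degree: P itself is harmonic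
    have htr : opTr n P = 0 := opTr_eq_zero_of_le_one hP hd
    have hβ : (2*((0:ℕ):ℝ)+2)*(2*(d:ℝ)+2*(0:ℕ)+n) ≠ 0 := by
      have : (1:ℝ) ≤ (n:ℝ) := by exact_mod_cast hn
      positivity
    refine ⟨⟨P, 0, hP, htr, isHomogeneous_zero _ _ _, by rw [map_zero, add_zero]⟩, ?_, ?_⟩
    · intro k
      set β : ℝ := 2*((k:ℝ)+1)*(2*(d:ℝ)+2*k+n) with hβdef
      have hβ0 : β ≠ 0 := by
        have h1 : (1:ℝ) ≤ (n:ℝ) := by exact_mod_cast hn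
        have hk0 : (0:ℝ) ≤ (k:ℝ) := Nat.cast_nonneg k
        have hd0 : (0:ℝ) ≤ (d:ℝ) := Nat.cast_nonneg d
        positivity
      refine ⟨β⁻¹ • P, ?_, ?_⟩
      · rw [← mem_homogeneousSubmodule]
        exact Submodule.smul_mem _ _ hP
      · rw [map_smul, map_smul, opTr_opG_pow (euler hP) k, htr, map_zero, zero_add,
          smul_smul, inv_mul_cancel₀ hβ0, one_smul]
    · refine Submodule.subset_span ?_
      exact ⟨d, 0, P, hP, htr, by rw [pow_zero, Module.End.one_apply]⟩
  · -- main case : d ≥ 2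
    push_neg at hd
    have hd2 : d - 2 < d := by omega
    have hd2' : 2 + (d - 2) = d := by omega
    -- part 1 : decomposition
    have htrP : (opTr n P).IsHomogeneous (d - 2) := opTr_isHomogeneous hP
    obtain ⟨Q, hQhom, hQ⟩ := ((IH (d-2) hd2 (opTr n P) htrP).2.1) 0
    rw [zero_add, pow_one, pow_zero, Module.End.one_apply] at hQ
    have hΦhom : (P - opG n Q).IsHomogeneous d := by
      rw [← mem_homogeneousSubmodule]
      refine Submodule.sub_mem _ ((mem_homogeneousSubmodule _ _).2 hP) ?_
      rw [mem_homogeneousSubmodule, ← hd2']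
      exact opG_isHomogeneous hQhom
    have hΦtr : opTr n (P - opG n Q) = 0 := by rw [map_sub, hQ, sub_self]
    have part1 : ∃ Φ Q, Φ.IsHomogeneous d ∧ opTr n Φ = 0 ∧ Q.IsHomogeneous (d-2) ∧
        P = Φ + opG n Q := ⟨P - opG n Q, Q, hΦhom, hΦtr, hQhom, by ring⟩
    obtain ⟨Φ, Q₀, hΦ, hΦtr', hQ₀, hPeq⟩ := part1
    refine ⟨⟨Φ, Q₀, hΦ, hΦtr', hQ₀, hPeq⟩, ?_, ?_⟩
    · -- part 2 : solving tr (g^(k+1) Q) = g^k P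
      intro k
      set β : ℝ := 2*((k:ℝ)+1)*(2*(d:ℝ)+2*k+n) with hβdef
      have hβ0 : β ≠ 0 := by
        have h1 : (1:ℝ) ≤ (n:ℝ) := by exact_mod_cast hn
        have hk0 : (0:ℝ) ≤ (k:ℝ) := Nat.cast_nonneg k
        have hd0 : (0:ℝ) ≤ (d:ℝ) := Nat.cast_nonneg d
        positivity
      obtain ⟨Q₂, hQ₂hom, hQ₂⟩ := ((IH (d-2) hd2 Q₀ hQ₀).2.1) (k+1)
      refine ⟨β⁻¹ • Φ + opG n Q₂, ?_, ?_⟩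
      · rw [← mem_homogeneousSubmodule]
        refine Submodule.add_mem _ (Submodule.smul_mem _ _ hΦ) ?_
        rw [mem_homogeneousSubmodule, ← hd2']
        exact opG_isHomogeneous hQ₂hom
      · rw [map_add, map_add, map_smul, map_smul,
          opTr_opG_pow (euler hΦ) k, hΦtr', map_zero, zero_add, smul_smul,
          inv_mul_cancel₀ hβ0, one_smul, h2' (k+1) Q₂, hQ₂,
          hPeq, map_add, h2' k Q₀]
    · -- part 3 : span membership
      have hΦmem : Φ ∈ Submodule.span ℝ (SS n) :=
        Submodule.subset_span ⟨d, 0, Φ, hΦ, hΦtr', by rw [pow_zero, Module.End.one_apply]⟩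
      have hQ₀span : Q₀ ∈ Submodule.span ℝ (SS n) := (IH (d-2) hd2 Q₀ hQ₀).2.2
      have hGQ₀ : opG n Q₀ ∈ Submodule.span ℝ (SS n) := by
        refine Submodule.span_induction
          (p := fun x _ => opG n x ∈ Submodule.span ℝ (SS n)) ?_ ?_ ?_ ?_ hQ₀span
        · rintro x ⟨s, k, Ψ, hΨ, hΨtr, rfl⟩
          exact Submodule.subset_span ⟨s, k+1, Ψ, hΨ, hΨtr, h2 k Ψ⟩
        · show opG n 0 ∈ _
          rw [map_zero]; exact Submodule.zero_mem _
        · intro x y _ _ hx hy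
          show opG n (x + y) ∈ _
          rw [map_add]; exact Submodule.add_mem _ hx hy
        · intro a x _ hx
          show opG n (a • x) ∈ _
          rw [map_smul]; exact Submodule.smul_mem _ _ hx
      rw [hPeq]
      exact Submodule.add_mem _ hΦmem hGQ₀

lemma span_SS_top (hn : 1 ≤ n) : Submodule.span ℝ (SS n) = ⊤ := by
  rw [eq_top_iff]
  intro p _
  rw [← sum_homogeneousComponent p]
  refine Submodule.sum_mem _ fun i _ => ?_
  exact (main_induction hn i (homogeneousComponent i p)
    (homogeneousComponent_isHomogeneous i p)).2.2

variable {n : ℕ}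

/-- if `𝒞` acts on each `g^k Φ` (with `Φ` harmonic homogeneous of degree
`s`) by the scalar `s + (n−2)/2`, then `𝒞² = ((n−2)/2)²·Id − c`, where
`c = g·tr − N(N+n−2)`. -/
theorem stmt5 (n : ℕ) (C : Module.End ℝ (MvPolynomial (Fin n) ℝ))
    (hC : ∀ (s k : ℕ) (Φ : MvPolynomial (Fin n) ℝ),
      opN n Φ = (s : ℝ) • Φ → opTr n Φ = 0 →
      C ((opG n ^ k) Φ) = ((s : ℝ) + ((n : ℝ) - 2) / 2) • (opG n ^ k) Φ) :
    C * C = ((((n : ℝ) - 2) / 2) ^ 2) • 1 -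
      (opG n * opTr n - opN n * (opN n + ((n : ℝ) - 2) • 1)) := by
  rcases Nat.eq_zero_or_pos n with rfl | hn
  · -- n = 0 : everything is a constant
    have hN0 : opN 0 = 0 := by simp [opN]
    have hT0 : opTr 0 = 0 := by simp [opTr]
    have hG0 : opG 0 = 0 := by
      simp only [opG, Finset.univ_eq_empty, Finset.sum_empty]
      ext p
      simp
    have hCp : ∀ p : MvPolynomial (Fin 0) ℝ, C p = (-1 : ℝ) • p := by
      intro p
      have := hC 0 0 p (by rw [hN0]; simp) (by rw [hT0]; simp)
      simpa using this
    apply LinearMap.ext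
    intro p
    have h1 : (C * C) p = p := by
      rw [Module.End.mul_apply, hCp (C p), hCp p, smul_smul]
      norm_num
    rw [h1]
    simp only [LinearMap.sub_apply, LinearMap.smul_apply, Module.End.one_apply,
      Module.End.mul_apply, hG0, hT0, hN0, LinearMap.zero_apply, map_zero]
    norm_num
  · -- n ≥ 1
    apply LinearMap.ext
    intro p
    have hp : p ∈ Submodule.span ℝ (SS n) := by rw [span_SS_top hn]; trivial
    refine Submodule.span_induction
      (p := fun q _ => (C * C) q =
        ((((((n : ℝ) - 2) / 2) ^ 2) • 1 -
          (opG n * opTr n - opN n * (opN n + ((n : ℝ) - 2) • 1)) :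
            Module.End ℝ (MvPolynomial (Fin n) ℝ))) q) ?_ ?_ ?_ ?_ hp
    · rintro q ⟨s, k, Φ, hΦ, hΦtr, rfl⟩
      have hNΦ : opN n Φ = (s : ℝ) • Φ := euler hΦ
      have hCq := hC s k Φ hNΦ hΦtr
      have hC2 : (C * C) ((opG n ^ k) Φ) =
          (((s:ℝ) + ((n:ℝ)-2)/2) * ((s:ℝ) + ((n:ℝ)-2)/2)) • (opG n ^ k) Φ := by
        rw [Module.End.mul_apply, hCq, map_smul, hCq, smul_smul]
      rw [hC2]
      have hNq : opN n ((opG n ^ k) Φ) = ((s:ℝ) + 2*k) • (opG n ^ k) Φ :=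
        opN_opG_pow hNΦ k
      have hGTq : opG n (opTr n ((opG n ^ k) Φ))
          = (2*(k:ℝ)*(2*(s:ℝ)+2*((k:ℝ)-1)+n)) • (opG n ^ k) Φ := by
        cases k with
        | zero =>
          rw [pow_zero, Module.End.one_apply, hΦtr, map_zero]
          norm_num
        | succ k =>
          rw [opTr_opG_pow hNΦ k, hΦtr, map_zero, zero_add, map_smul,
            ← Module.End.mul_apply, ← pow_succ']
          congr 1
          push_cast
          ring
      simp only [LinearMap.sub_apply, LinearMap.smul_apply, Module.End.one_apply,
        Module.End.mul_apply, LinearMap.add_apply, hGTq, hNq]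
      rw [map_add, map_smul, hNq, map_smul, hNq, smul_smul, smul_smul]
      match_scalars
      ring
    · simp
    · intro x y _ _ hx hy
      simp only [map_add, hx, hy]
    · intro a x _ hx
      simp only [map_smul, hx]
end

section
/- On ℝ[y₁,…,yₙ], for every m ≥ 0 the normal-ordered power satisfies g^m ∘ tr^m = 4^m · ((𝒞−𝒩+1)/2)_m · ((𝒞+𝒩−1)/2)_m evaluated as an operator, where (x)_m = x(x+1)⋯(x+m−1) is the Pochhammer symbol applied to the commuting operators (𝒞−𝒩+1)/2 and (𝒞+𝒩−1)/2. [Equivalently, on g^k Φ with Φ harmonic of degree s, g^m tr^m acts by the scalar ∏_{j=0}^{m−1} (2k−2j)(2s+2k+n−2−2j).] -/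
open MvPolynomial Finset

lemma pderiv_r2 (n : ℕ) (i : Fin n) :
    pderiv i (∑ j : Fin n, (X j : MvPolynomial (Fin n) ℝ)^2) = 2 * X i := by
  rw [map_sum, Finset.sum_eq_single i]
  · rw [pow_two, pderiv_mul, pderiv_X_self]; ring
  · intro j _ hj
    rw [pow_two, pderiv_mul, pderiv_X, Pi.single_eq_of_ne hj]
    simp
  · simp

/-- Commutator identity: `tr ∘ g = g ∘ tr + 4N + 2n`. -/
lemma lemA (n : ℕ) (p : MvPolynomial (Fin n) ℝ) :
    opTr n (opG n p) = opG n (opTr n p) + (4:ℝ) • opN n p + ((2*(n:ℝ))) • p := by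
  simp only [opTr, opG, opN, LinearMap.sum_apply, LinearMap.comp_apply,
    LinearMap.mulLeft_apply, Derivation.coeFn_coe]
  have key : ∀ i : Fin n,
      pderiv i (pderiv i ((∑ j : Fin n, (X j : MvPolynomial (Fin n) ℝ)^2) * p)) =
      (∑ j : Fin n, (X j : MvPolynomial (Fin n) ℝ)^2) * pderiv i (pderiv i p)
        + (4 : MvPolynomial (Fin n) ℝ) * (X i * pderiv i p) + (2 : MvPolynomial (Fin n) ℝ) * p := by
    intro i
    have h2 : pderiv i (2 : MvPolynomial (Fin n) ℝ) = 0 := by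
      have h : (2 : MvPolynomial (Fin n) ℝ) = C 2 := by rw [map_ofNat]
      rw [h, pderiv_C]
    simp only [pderiv_mul, pderiv_r2, map_add, pderiv_X_self, h2]
    ring
  rw [Finset.sum_congr rfl fun i _ => key i]
  rw [Finset.sum_add_distrib, Finset.sum_add_distrib, ← Finset.mul_sum, ← Finset.mul_sum,
    Finset.sum_const, card_univ, Fintype.card_fin]
  have h4 : (4 : MvPolynomial (Fin n) ℝ) * (∑ i : Fin n, X i * pderiv i p)
      = (4:ℝ) • (∑ i : Fin n, X i * pderiv i p) := by
    rw [smul_eq_C_mul, map_ofNat]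
  have h2n : n • ((2 : MvPolynomial (Fin n) ℝ) * p) = (2*(n:ℝ)) • p := by
    rw [smul_eq_C_mul, ← Nat.cast_smul_eq_nsmul ℝ, smul_eq_C_mul]
    rw [map_mul, map_ofNat]
    ring
  rw [h4, h2n]

/-- Commutator identity: `N ∘ g = g ∘ N + 2g`. -/
lemma lemB (n : ℕ) (p : MvPolynomial (Fin n) ℝ) :
    opN n (opG n p) = opG n (opN n p) + (2:ℝ) • opG n p := by
  simp only [opN, opG, LinearMap.sum_apply, LinearMap.comp_apply,
    LinearMap.mulLeft_apply, Derivation.coeFn_coe]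
  have key : ∀ i : Fin n,
      X i * pderiv i ((∑ j : Fin n, (X j : MvPolynomial (Fin n) ℝ)^2) * p) =
      (∑ j : Fin n, (X j : MvPolynomial (Fin n) ℝ)^2) * (X i * pderiv i p)
        + (2 : MvPolynomial (Fin n) ℝ) * (X i ^ 2 * p) := by
    intro i
    rw [pderiv_mul, pderiv_r2]
    ring
  rw [Finset.sum_congr rfl fun i _ => key i, Finset.sum_add_distrib, ← Finset.mul_sum,
    ← Finset.mul_sum, ← Finset.sum_mul]
  have h2 : (2 : MvPolynomial (Fin n) ℝ) * ((∑ i : Fin n, X i ^ 2) * p)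
      = (2:ℝ) • ((∑ i : Fin n, X i ^ 2) * p) := by
    rw [smul_eq_C_mul, map_ofNat]
  rw [← h2]

/-- `N (g^k Φ) = (s + 2k) • g^k Φ` for `Φ` of degree `s`. -/
lemma lemC (n : ℕ) (s k : ℕ) (Φ : MvPolynomial (Fin n) ℝ)
    (hN : opN n Φ = (s : ℝ) • Φ) :
    opN n ((opG n ^ k) Φ) = ((s : ℝ) + 2 * k) • (opG n ^ k) Φ := by
  induction k with
  | zero => simpa using hN
  | succ k ih =>
    have hg : (opG n ^ (k+1)) Φ = opG n ((opG n ^ k) Φ) := by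
      rw [pow_succ', Module.End.mul_apply]
    rw [hg, lemB, ih, map_smul, ← hg]
    push_cast
    module

/-- `tr (g^(k+1) Φ) = 2(k+1)(2s+2(k+1)+n-2) • g^k Φ`. -/
lemma lemD (n : ℕ) (s k : ℕ) (Φ : MvPolynomial (Fin n) ℝ)
    (hN : opN n Φ = (s : ℝ) • Φ) (hT : opTr n Φ = 0) :
    opTr n ((opG n ^ (k+1)) Φ)
      = (2 * ((k:ℝ)+1) * (2*(s:ℝ) + 2*((k:ℝ)+1) + n - 2)) • (opG n ^ k) Φ := by
  induction k with
  | zero =>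
    have hg : (opG n ^ 1) Φ = opG n Φ := by rw [pow_one]
    rw [hg, lemA, hT, map_zero, hN]
    simp only [pow_zero, Module.End.one_apply]
    push_cast
    module
  | succ k ih =>
    have hg : (opG n ^ (k+2)) Φ = opG n ((opG n ^ (k+1)) Φ) := by
      rw [pow_succ', Module.End.mul_apply]
    rw [hg, lemA, ih, map_smul, lemC n s (k+1) Φ hN]
    have hg' : (opG n ^ (k+2)) Φ = opG n ((opG n ^ (k+1)) Φ) := hg
    have hg2 : opG n ((opG n ^ k) Φ) = (opG n ^ (k+1)) Φ := by
      rw [pow_succ', Module.End.mul_apply]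
    rw [hg2]
    push_cast
    module

/-- for every `m ≥ 0`, the normal-ordered power `g^m ∘ tr^m` acts on
`g^k Φ` (with `Φ` harmonic homogeneous of degree `s`) by the Pochhammer-type scalar
`∏_{j=0}^{m−1} (2k−2j)(2s+2k+n−2−2j)`. -/
theorem stmt8 (n : ℕ) :
    ∀ (m s k : ℕ) (Φ : MvPolynomial (Fin n) ℝ),
      opN n Φ = (s : ℝ) • Φ → opTr n Φ = 0 →
      (opG n ^ m * opTr n ^ m) ((opG n ^ k) Φ) =
        (∏ j ∈ Finset.range m,
          ((2 * (k : ℝ) - 2 * j) * (2 * s + 2 * k + n - 2 - 2 * j))) •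
          (opG n ^ k) Φ := by
  intro m
  induction m with
  | zero => intro s k Φ _ _; simp
  | succ m ih =>
    intro s k Φ hN hT
    have hsplit : (opG n ^ (m+1) * opTr n ^ (m+1)) ((opG n ^ k) Φ)
        = opG n ((opG n ^ m * opTr n ^ m) (opTr n ((opG n ^ k) Φ))) := by
      rw [Module.End.mul_apply, pow_succ' (opG n) m, pow_succ (opTr n) m,
        Module.End.mul_apply, Module.End.mul_apply, Module.End.mul_apply]
    cases k with
    | zero =>
      simp only [pow_zero, Module.End.one_apply] at *
      rw [hsplit]
      simp only [pow_zero, Module.End.one_apply, hT, map_zero]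
      rw [Finset.prod_range_succ']
      simp
    | succ k =>
      rw [hsplit, lemD n s k Φ hN hT, map_smul, map_smul,
        ih s k Φ hN hT, map_smul]
      have hg2 : opG n ((opG n ^ k) Φ) = (opG n ^ (k+1)) Φ := by
        rw [pow_succ', Module.End.mul_apply]
      rw [hg2, smul_smul, Finset.prod_range_succ']
      have hp : (∏ j ∈ Finset.range m,
            ((2 * ((k:ℝ)+1) - 2 * ((j:ℕ)+1:ℕ)) *
              (2 * (s:ℝ) + 2 * ((k:ℝ)+1) + n - 2 - 2 * ((j:ℕ)+1:ℕ)))) =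
          ∏ j ∈ Finset.range m,
            ((2 * (k:ℝ) - 2 * j) * (2 * (s:ℝ) + 2 * k + n - 2 - 2 * j)) :=
        Finset.prod_congr rfl fun j _ => by push_cast; ring
      congr 1
      push_cast
      push_cast at hp
      rw [hp]
      ring
end
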